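/- Let p ∈ [2,∞) and A, D ∈ M_n(ℂ). Then w_p(diag(A, D)) ≤ 2^{1 - 2/p}( w_p(A)^p + w_p(D)^p )^{1/p}, with equality w_p(diag(A,D)) = (w_p(A)^p + w_p(D)^p)^{1/p} when A and D are Hermitian. -/

import Mathlib

open Matrix
open scoped ComplexOrder

variable {n : Type*} [Fintype n] [DecidableEq n]

/-- Real part of a matrix: `Re(B) = (B + Bᴴ)/2`. -/
noncomputable def matRe (B : Matrix n n ℂ) : Matrix n n ℂ := (1/2 : ℂ) • (B + Bᴴ)

/-- Generalized numerical radius associated to a norm-like function `N`. -/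
noncomputable def wN (N : Matrix n n ℂ → ℝ) (A : Matrix n n ℂ) : ℝ :=
  ⨆ θ : ℝ, N (matRe (Complex.exp (θ * Complex.I) • A))

/-- `N` is unitarily invariant. -/
def UnitarilyInvariant (N : Matrix n n ℂ → ℝ) : Prop :=
  ∀ (U V : Matrix.unitaryGroup n ℂ) (A : Matrix n n ℂ), N ((U : Matrix n n ℂ) * A * (V : Matrix n n ℂ)) = N A

/-- Real power of a positive definite matrix via spectral decomposition. -/
noncomputable def rpowM {A : Matrix n n ℂ} (hA : A.PosDef) (t : ℝ) : Matrix n n ℂ :=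
  (hA.1.eigenvectorUnitary : Matrix n n ℂ) *
    Matrix.diagonal (fun i => ((hA.1.eigenvalues i ^ t : ℝ) : ℂ)) *
    (hA.1.eigenvectorUnitary : Matrix n n ℂ)ᴴ

/-- Schatten `p`-norm of a matrix, via its singular values. -/
noncomputable def schatten (p : ℝ) (A : Matrix n n ℂ) : ℝ :=
  (∑ i, Real.sqrt ((Matrix.posSemidef_conjTranspose_mul_self A).1.eigenvalues i) ^ p) ^ (1/p)

/-- Schatten `p` generalized numerical radius. -/
noncomputable def wp (p : ℝ) (A : Matrix n n ℂ) : ℝ := wN (schatten p) A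

section Helpers
open Polynomial
variable {p : ℝ}
variable {m : Type*} [Fintype m] [DecidableEq m]

lemma my_charpoly_diag (v : m → ℂ) : (Matrix.diagonal v).charpoly = ∏ i, (X - C (v i)) := by
  have h : charmatrix (Matrix.diagonal v) = Matrix.diagonal (fun i => X - C (v i)) := by
    ext i j
    rcases eq_or_ne i j with rfl | h
    · simp [charmatrix_apply_eq]
    · simp [charmatrix_apply_ne _ _ _ h, Matrix.diagonal_apply_ne _ h]
  rw [Matrix.charpoly, h, Matrix.det_diagonal]

lemma my_charpoly_conj_unitary (U : Matrix.unitaryGroup m ℂ) (M : Matrix m m ℂ) :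
    ((U : Matrix m m ℂ) * M * star (U : Matrix m m ℂ)).charpoly = M.charpoly := by
  have hUU : (star (U : Matrix m m ℂ)).map C * (U : Matrix m m ℂ).map C = 1 := by
    rw [← Matrix.map_mul, Matrix.UnitaryGroup.star_mul_self]; simp
  have hUU' : (U : Matrix m m ℂ).map C * (star (U : Matrix m m ℂ)).map C = 1 := by
    rw [← Matrix.map_mul, Unitary.mul_star_self_of_mem U.2]; simp
  have hcm : charmatrix ((U : Matrix m m ℂ) * M * star (U : Matrix m m ℂ))
      = (U : Matrix m m ℂ).map C * charmatrix M * (star (U : Matrix m m ℂ)).map C := by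
    rw [charmatrix, charmatrix, mul_sub, sub_mul]
    congr 1
    · have hc : Commute (Matrix.scalar m (X : ℂ[X])) ((star (U : Matrix m m ℂ)).map C) :=
        Matrix.scalar_commute _ (fun r => Commute.all _ _) _
      rw [mul_assoc, hc.eq, ← mul_assoc, hUU', one_mul]
    · simp only [RingHom.mapMatrix_apply, Matrix.map_mul]
  rw [Matrix.charpoly, Matrix.charpoly, hcm, Matrix.det_mul, Matrix.det_mul, mul_comm,
    ← mul_assoc, ← Matrix.det_mul, hUU, Matrix.det_one, one_mul]

lemma my_roots_charpoly_diag (v : m → ℂ) :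
    (Matrix.diagonal v).charpoly.roots = Finset.univ.val.map v := by
  rw [my_charpoly_diag, ← Polynomial.roots_multiset_prod_X_sub_C (Finset.univ.val.map v)]
  congr 1
  rw [Multiset.map_map]
  rfl

lemma my_eig_multiset {M : Matrix m m ℂ} (hM : M.IsHermitian) :
    M.charpoly.roots = Finset.univ.val.map (fun i => (hM.eigenvalues i : ℂ)) := by
  conv_lhs => rw [hM.spectral_theorem, Unitary.conjStarAlgAut_apply]
  rw [my_charpoly_conj_unitary, my_roots_charpoly_diag]
  rfl

lemma my_sum_eig_eq {M : Matrix m m ℂ} (hM : M.IsHermitian) (U : Matrix.unitaryGroup m ℂ)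
    (d : m → ℝ)
    (h : M = (U : Matrix m m ℂ) * Matrix.diagonal (fun i => (d i : ℂ)) * star (U : Matrix m m ℂ))
    (g : ℝ → ℝ) : ∑ i, g (hM.eigenvalues i) = ∑ i, g (d i) := by
  have h1 : M.charpoly.roots = Finset.univ.val.map (fun i => (d i : ℂ)) := by
    conv_lhs => rw [h]
    rw [my_charpoly_conj_unitary, my_roots_charpoly_diag]
  have h2 := my_eig_multiset hM
  rw [h1] at h2
  have h3 : Finset.univ.val.map (fun i => (d i : ℂ))
      = Finset.univ.val.map ((fun x : ℝ => (x : ℂ)) ∘ d) := rfl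
  have h4 : Finset.univ.val.map (fun i => (hM.eigenvalues i : ℂ))
      = Finset.univ.val.map ((fun x : ℝ => (x : ℂ)) ∘ hM.eigenvalues) := rfl
  rw [h3, h4, ← Multiset.map_map, ← Multiset.map_map] at h2
  have h5 : Finset.univ.val.map d = Finset.univ.val.map hM.eigenvalues :=
    Multiset.map_injective Complex.ofReal_injective h2
  have e1 : ∑ i, g (hM.eigenvalues i) = ((Finset.univ.val.map hM.eigenvalues).map g).sum := by
    rw [Multiset.map_map]; rfl
  have e2 : ∑ i, g (d i) = ((Finset.univ.val.map d).map g).sum := by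
    rw [Multiset.map_map]; rfl
  rw [e1, e2, h5]

lemma my_trace_eq_sum_eig {M : Matrix m m ℂ} (hM : M.IsHermitian) :
    M.trace = ∑ i, (hM.eigenvalues i : ℂ) := by
  conv_lhs => rw [hM.spectral_theorem, Unitary.conjStarAlgAut_apply]
  rw [Matrix.trace_mul_cycle, Matrix.UnitaryGroup.star_mul_self, one_mul, Matrix.trace_diagonal]
  rfl

/-- singular-value sum -/
noncomputable def sval (p : ℝ) (X : Matrix m m ℂ) : ℝ :=
  ∑ i, Real.sqrt ((Matrix.posSemidef_conjTranspose_mul_self X).1.eigenvalues i) ^ p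

lemma sval_nonneg (p : ℝ) (X : Matrix m m ℂ) : 0 ≤ sval p X :=
  by unfold sval; exact
  Finset.sum_nonneg fun i _ => Real.rpow_nonneg (Real.sqrt_nonneg _) _


lemma sval_fromBlocks (p : ℝ) (B C : Matrix m m ℂ) :
    sval p (Matrix.fromBlocks B 0 0 C) = sval p B + sval p C := by
  set g : ℝ → ℝ := fun x => Real.sqrt x ^ p with hg
  have hB := Matrix.posSemidef_conjTranspose_mul_self B
  have hC := Matrix.posSemidef_conjTranspose_mul_self C
  have hX := Matrix.posSemidef_conjTranspose_mul_self (Matrix.fromBlocks B 0 0 C)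
  set uB := hB.1.eigenvectorUnitary with huB
  set uC := hC.1.eigenvectorUnitary with huC
  -- block unitary
  have hmem : Matrix.fromBlocks (uB : Matrix m m ℂ) 0 0 (uC : Matrix m m ℂ) ∈
      Matrix.unitaryGroup (m ⊕ m) ℂ := by
    rw [Matrix.mem_unitaryGroup_iff]
    have : star (Matrix.fromBlocks (uB : Matrix m m ℂ) 0 0 (uC : Matrix m m ℂ))
        = Matrix.fromBlocks (star (uB : Matrix m m ℂ)) 0 0 (star (uC : Matrix m m ℂ)) := by
      simp [Matrix.star_eq_conjTranspose, Matrix.fromBlocks_conjTranspose]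
    rw [this, Matrix.fromBlocks_multiply]
    simp [Unitary.mul_star_self_of_mem uB.2, Unitary.mul_star_self_of_mem uC.2,
      Matrix.fromBlocks_one]
  have hdec : (Matrix.fromBlocks B 0 0 C)ᴴ * Matrix.fromBlocks B 0 0 C
      = (⟨_, hmem⟩ : Matrix.unitaryGroup (m ⊕ m) ℂ) *
        Matrix.diagonal (fun i => ((Sum.elim hB.1.eigenvalues hC.1.eigenvalues i : ℝ) : ℂ)) *
        star ((⟨_, hmem⟩ : Matrix.unitaryGroup (m ⊕ m) ℂ) : Matrix (m ⊕ m) (m ⊕ m) ℂ) := by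
    have hd : Matrix.diagonal (fun i => ((Sum.elim hB.1.eigenvalues hC.1.eigenvalues i : ℝ) : ℂ))
        = Matrix.fromBlocks
          (Matrix.diagonal (RCLike.ofReal ∘ hB.1.eigenvalues))
          0 0 (Matrix.diagonal (RCLike.ofReal ∘ hC.1.eigenvalues)) := by
      rw [Matrix.fromBlocks_diagonal]
      congr 1
      funext i
      cases i <;> rfl
    have hstar : star ((⟨_, hmem⟩ : Matrix.unitaryGroup (m ⊕ m) ℂ) : Matrix (m ⊕ m) (m ⊕ m) ℂ)
        = Matrix.fromBlocks (star (uB : Matrix m m ℂ)) 0 0 (star (uC : Matrix m m ℂ)) := by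
      simp [Matrix.star_eq_conjTranspose, Matrix.fromBlocks_conjTranspose]
    rw [hd, hstar]
    show _ = Matrix.fromBlocks (uB : Matrix m m ℂ) 0 0 (uC : Matrix m m ℂ) * _ * _
    rw [Matrix.fromBlocks_multiply, Matrix.fromBlocks_multiply]
    have h1 : (Matrix.fromBlocks B 0 0 C)ᴴ = Matrix.fromBlocks Bᴴ 0 0 Cᴴ := by
      simp [Matrix.fromBlocks_conjTranspose]
    rw [h1, Matrix.fromBlocks_multiply]
    simp only [Matrix.mul_zero, Matrix.zero_mul, add_zero, zero_add]
    exact congrArg₂ (fun X Y => Matrix.fromBlocks X 0 0 Y) hB.1.spectral_theorem hC.1.spectral_theorem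
  have key := my_sum_eig_eq hX.1 ⟨_, hmem⟩ (Sum.elim hB.1.eigenvalues hC.1.eigenvalues) hdec g
  unfold sval
  rw [key, Fintype.sum_sum_type]
  rfl

lemma sval_smul (p : ℝ) (z : ℂ) (X : Matrix m m ℂ) :
    sval p (z • X) = ‖z‖ ^ p * sval p X := by
  set g : ℝ → ℝ := fun x => Real.sqrt x ^ p with hg
  have hX := Matrix.posSemidef_conjTranspose_mul_self X
  have hZ := Matrix.posSemidef_conjTranspose_mul_self (z • X)
  set u := hX.1.eigenvectorUnitary with hu
  have hdec : (z • X)ᴴ * (z • X)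
      = (u : Matrix m m ℂ) *
        Matrix.diagonal (fun i => ((‖z‖ ^ 2 * hX.1.eigenvalues i : ℝ) : ℂ)) *
        star (u : Matrix m m ℂ) := by
    have h1 : (z • X)ᴴ * (z • X) = ((‖z‖ ^ 2 : ℝ) : ℂ) • (Xᴴ * X) := by
      rw [Matrix.conjTranspose_smul, Matrix.smul_mul, Matrix.mul_smul, smul_smul]
      congr 1
      rw [Complex.star_def, ← Complex.normSq_eq_conj_mul_self, Complex.normSq_eq_norm_sq]
    have h3 : Matrix.diagonal (fun i => ((‖z‖ ^ 2 * hX.1.eigenvalues i : ℝ) : ℂ))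
        = ((‖z‖ ^ 2 : ℝ) : ℂ) • Matrix.diagonal (RCLike.ofReal ∘ hX.1.eigenvalues) := by
      ext i j
      rcases eq_or_ne i j with rfl | h
      · push_cast
        simp [Matrix.diagonal_apply_eq, Function.comp, Matrix.smul_apply, smul_eq_mul]
      · simp [Matrix.diagonal_apply_ne _ h, Matrix.smul_apply]
    rw [h1, h3]
    conv_lhs => rw [hX.1.spectral_theorem, Unitary.conjStarAlgAut_apply]
    rw [Matrix.mul_smul, Matrix.smul_mul]
  have key := my_sum_eig_eq hZ.1 u _ hdec g
  unfold sval
  rw [key, Finset.mul_sum]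
  refine Finset.sum_congr rfl fun i _ => ?_
  have h2 : Real.sqrt (‖z‖ ^ 2 * hX.1.eigenvalues i) = ‖z‖ * Real.sqrt (hX.1.eigenvalues i) := by
    rw [Real.sqrt_mul (sq_nonneg _), Real.sqrt_sq (norm_nonneg _)]
  show g _ = _
  rw [hg]
  simp only
  rw [h2, Real.mul_rpow (norm_nonneg _) (Real.sqrt_nonneg _)]


lemma my_eig_le (X : Matrix m m ℂ) (i : m) :
    (Matrix.posSemidef_conjTranspose_mul_self X).1.eigenvalues i
      ≤ ∑ k, ∑ j, ‖X j k‖ ^ 2 := by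
  have hP := Matrix.posSemidef_conjTranspose_mul_self X
  have h1 : ∑ k, hP.1.eigenvalues k = ∑ k, ∑ j, ‖X j k‖ ^ 2 := by
    have ht := my_trace_eq_sum_eig hP.1
    have ht2 : (Xᴴ * X).trace = ((∑ k, ∑ j, ‖X j k‖ ^ 2 : ℝ) : ℂ) := by
      rw [Matrix.trace]
      push_cast
      refine Finset.sum_congr rfl fun k _ => ?_
      rw [Matrix.diag_apply, Matrix.mul_apply]
      refine Finset.sum_congr rfl fun j _ => ?_
      rw [Matrix.conjTranspose_apply, Complex.star_def, ← Complex.normSq_eq_conj_mul_self,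
        Complex.normSq_eq_norm_sq]
      push_cast
      ring
    rw [ht] at ht2
    exact_mod_cast ht2
  calc hP.1.eigenvalues i ≤ ∑ k, hP.1.eigenvalues k :=
        Finset.single_le_sum (fun j _ => hP.eigenvalues_nonneg j) (Finset.mem_univ i)
    _ = _ := h1

lemma matRe_apply (M : Matrix m m ℂ) (i j : m) :
    matRe M i j = (1/2 : ℂ) * (M i j + star (M j i)) := by
  simp [matRe, Matrix.add_apply, Matrix.conjTranspose_apply, Matrix.smul_apply, smul_eq_mul]

lemma matRe_smul_fromBlocks (z : ℂ) (A D : Matrix m m ℂ) :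
    matRe (z • Matrix.fromBlocks A 0 0 D)
      = Matrix.fromBlocks (matRe (z • A)) 0 0 (matRe (z • D)) := by
  have h1 : z • Matrix.fromBlocks A 0 0 D = Matrix.fromBlocks (z • A) 0 0 (z • D) := by
    rw [Matrix.fromBlocks_smul, smul_zero]
  rw [matRe, h1, Matrix.fromBlocks_conjTranspose, Matrix.conjTranspose_zero]
  rw [Matrix.fromBlocks_add, Matrix.fromBlocks_smul]
  simp [matRe]

lemma matRe_smul_hermitian (z : ℂ) {H : Matrix m m ℂ} (hH : H.IsHermitian) :
    matRe (z • H) = ((z.re : ℝ) : ℂ) • H := by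
  rw [matRe, Matrix.conjTranspose_smul, hH.eq, ← add_smul, smul_smul]
  congr 1
  rw [Complex.star_def, Complex.add_conj]
  push_cast
  ring

lemma schatten_eq (p : ℝ) (X : Matrix m m ℂ) : schatten p X = (sval p X) ^ (1/p) := rfl

lemma schatten_nonneg (p : ℝ) (X : Matrix m m ℂ) : 0 ≤ schatten p X :=
  Real.rpow_nonneg (sval_nonneg p X) _

lemma schatten_rpow (hp : p ≠ 0) (X : Matrix m m ℂ) : schatten p X ^ p = sval p X := by
  rw [schatten_eq, ← Real.rpow_mul (sval_nonneg p X), one_div_mul_cancel hp, Real.rpow_one]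

lemma schatten_smul (hp : p ≠ 0) (z : ℂ) (X : Matrix m m ℂ) :
    schatten p (z • X) = ‖z‖ * schatten p X := by
  rw [schatten_eq, schatten_eq, sval_smul,
    Real.mul_rpow (Real.rpow_nonneg (norm_nonneg z) _) (sval_nonneg p X),
    ← Real.rpow_mul (norm_nonneg z), mul_one_div_cancel hp, Real.rpow_one]

lemma schatten_matRe_le (hp : 0 < p) (X : Matrix m m ℂ) (z : ℂ) (hz : ‖z‖ = 1) :
    schatten p (matRe (z • X))
      ≤ ((Fintype.card m : ℝ) *
          Real.sqrt (∑ i, ∑ j, ((‖X i j‖ + ‖X j i‖)/2) ^ 2) ^ p) ^ (1/p) := by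
  set K : ℝ := ∑ i, ∑ j, ((‖X i j‖ + ‖X j i‖)/2) ^ 2 with hK
  set B := matRe (z • X) with hB
  have hent : ∀ i j, ‖B i j‖ ≤ (‖X i j‖ + ‖X j i‖)/2 := by
    intro i j
    rw [hB, matRe_apply]
    calc ‖(1/2 : ℂ) * ((z • X) i j + star ((z • X) j i))‖
        = (1/2) * ‖(z • X) i j + star ((z • X) j i)‖ := by
          rw [norm_mul]; norm_num
      _ ≤ (1/2) * (‖(z • X) i j‖ + ‖star ((z • X) j i)‖) := by
          gcongr; exact norm_add_le _ _
      _ = (‖X i j‖ + ‖X j i‖)/2 := by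
          rw [norm_star]
          simp only [Matrix.smul_apply, smul_eq_mul, norm_mul, hz, one_mul]
          ring
  have heig : ∀ i, (Matrix.posSemidef_conjTranspose_mul_self B).1.eigenvalues i ≤ K := by
    intro i
    calc (Matrix.posSemidef_conjTranspose_mul_self B).1.eigenvalues i
        ≤ ∑ k, ∑ j, ‖B j k‖ ^ 2 := my_eig_le B i
      _ ≤ ∑ k, ∑ j, ((‖X j k‖ + ‖X k j‖)/2) ^ 2 :=
          Finset.sum_le_sum fun k _ => Finset.sum_le_sum fun j _ =>
            pow_le_pow_left₀ (norm_nonneg _) (hent j k) 2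
      _ = K := Finset.sum_comm
  rw [schatten_eq]
  refine Real.rpow_le_rpow (sval_nonneg p B) ?_ (by positivity)
  unfold sval
  calc ∑ i, Real.sqrt ((Matrix.posSemidef_conjTranspose_mul_self B).1.eigenvalues i) ^ p
      ≤ ∑ _i : m, Real.sqrt K ^ p :=
        Finset.sum_le_sum fun i _ =>
          Real.rpow_le_rpow (Real.sqrt_nonneg _) (Real.sqrt_le_sqrt (heig i)) hp.le
    _ = (Fintype.card m : ℝ) * Real.sqrt K ^ p := by
        rw [Finset.sum_const, nsmul_eq_mul, Finset.card_univ]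

lemma bddAbove_schatten_matRe (hp : 0 < p) (X : Matrix m m ℂ) :
    BddAbove (Set.range fun θ : ℝ => schatten p (matRe (Complex.exp (θ * Complex.I) • X))) := by
  refine ⟨((Fintype.card m : ℝ) *
      Real.sqrt (∑ i, ∑ j, ((‖X i j‖ + ‖X j i‖)/2) ^ 2) ^ p) ^ (1/p), ?_⟩
  rintro x ⟨θ, rfl⟩
  exact schatten_matRe_le hp X _ (by rw [Complex.norm_exp_ofReal_mul_I])

lemma le_wp (hp : 0 < p) (X : Matrix m m ℂ) (θ : ℝ) :
    schatten p (matRe (Complex.exp (θ * Complex.I) • X)) ≤ wp p X :=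
  le_ciSup (bddAbove_schatten_matRe hp X) θ

lemma wp_nonneg (hp : 0 < p) (X : Matrix m m ℂ) : 0 ≤ wp p X :=
  (schatten_nonneg p _).trans (le_wp hp X 0)

lemma wp_hermitian (hp : 0 < p) {H : Matrix m m ℂ} (hH : H.IsHermitian) :
    wp p H = schatten p H := by
  have he : ∀ θ : ℝ, schatten p (matRe (Complex.exp (θ * Complex.I) • H))
      = |Real.cos θ| * schatten p H := by
    intro θ
    rw [matRe_smul_hermitian _ hH, schatten_smul hp.ne']
    congr 1
    rw [Complex.norm_real, Real.norm_eq_abs, Complex.exp_ofReal_mul_I_re]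
  apply le_antisymm
  · unfold wp wN
    refine ciSup_le fun θ => ?_
    rw [he θ]
    exact mul_le_of_le_one_left (schatten_nonneg p H) (Real.abs_cos_le_one θ)
  · have h0 := le_wp hp H 0
    rw [he 0] at h0
    simpa using h0

lemma wp_fromBlocks_le (hp : 0 < p) (A D : Matrix m m ℂ) :
    wp p (Matrix.fromBlocks A 0 0 D) ≤ (wp p A ^ p + wp p D ^ p) ^ (1/p) := by
  unfold wp wN
  refine ciSup_le fun θ => ?_
  have hsplit : schatten p (matRe (Complex.exp (θ * Complex.I) • Matrix.fromBlocks A 0 0 D))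
      = (schatten p (matRe (Complex.exp (θ * Complex.I) • A)) ^ p
        + schatten p (matRe (Complex.exp (θ * Complex.I) • D)) ^ p) ^ (1/p) := by
    rw [matRe_smul_fromBlocks, schatten_eq, sval_fromBlocks, schatten_rpow hp.ne',
      schatten_rpow hp.ne']
  rw [hsplit]
  refine Real.rpow_le_rpow (add_nonneg (Real.rpow_nonneg (schatten_nonneg _ _) _)
    (Real.rpow_nonneg (schatten_nonneg _ _) _)) (add_le_add ?_ ?_) (by positivity)
  · exact Real.rpow_le_rpow (schatten_nonneg _ _) (le_wp hp A θ) hp.le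
  · exact Real.rpow_le_rpow (schatten_nonneg _ _) (le_wp hp D θ) hp.le

lemma wp_fromBlocks_hermitian (hp : 0 < p) {A D : Matrix m m ℂ}
    (hA : A.IsHermitian) (hD : D.IsHermitian) :
    wp p (Matrix.fromBlocks A 0 0 D) = (wp p A ^ p + wp p D ^ p) ^ (1/p) := by
  have hblk : (Matrix.fromBlocks A 0 0 D).IsHermitian := by
    show (Matrix.fromBlocks A 0 0 D)ᴴ = Matrix.fromBlocks A 0 0 D
    rw [Matrix.fromBlocks_conjTranspose, Matrix.conjTranspose_zero, hA.eq, hD.eq]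
  rw [wp_hermitian hp hblk, wp_hermitian hp hA, wp_hermitian hp hD,
    schatten_eq p (Matrix.fromBlocks A 0 0 D), sval_fromBlocks, schatten_rpow hp.ne',
    schatten_rpow hp.ne']

end Helpers


theorem wp_block_diagonal (A D : Matrix n n ℂ) {p : ℝ} (hp : 2 ≤ p) :
    wp p (Matrix.fromBlocks A 0 0 D) ≤ 2 ^ (1 - 2/p) * (wp p A ^ p + wp p D ^ p) ^ (1/p) ∧
    (A.IsHermitian → D.IsHermitian →
      wp p (Matrix.fromBlocks A 0 0 D) = (wp p A ^ p + wp p D ^ p) ^ (1/p)) := by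
  have hp0 : 0 < p := lt_of_lt_of_le two_pos hp
  constructor
  · refine (wp_fromBlocks_le hp0 A D).trans ?_
    refine le_mul_of_one_le_left
      (Real.rpow_nonneg (add_nonneg (Real.rpow_nonneg (wp_nonneg hp0 A) p)
        (Real.rpow_nonneg (wp_nonneg hp0 D) p)) _) ?_
    calc (1:ℝ) = (2:ℝ) ^ (0:ℝ) := (Real.rpow_zero 2).symm
      _ ≤ 2 ^ (1 - 2/p) := Real.rpow_le_rpow_of_exponent_le one_le_two
          (sub_nonneg.2 ((div_le_one hp0).2 hp))
  · intro hA hD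
    exact wp_fromBlocks_hermitian hp0 hA hD
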